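/- Restricted sum formulas for double zeta values: for an even integer l ≥ 4, Σ_{l1≥2, l2≥1, l1+l2=l, l1 and l2 both even} ζ(l1,l2) = (3/4)·ζ(l) and Σ_{l1≥2, l2≥1, l1+l2=l, l1 and l2 both odd} ζ(l1,l2) = (1/4)·ζ(l). -/

import Mathlib

/-- Riemann zeta value -/
noncomputable def rz (l : ℕ) : ℝ :=
  ∑' m : ℕ, if 0 < m then 1 / (m : ℝ) ^ l else 0

/-- double zeta value -/
noncomputable def dz (a b : ℕ) : ℝ :=
  ∑' p : ℕ × ℕ, if p.2 < p.1 ∧ 0 < p.2 then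
    1 / ((p.1 : ℝ) ^ a * (p.2 : ℝ) ^ b) else 0

/-- triple zeta value -/
noncomputable def tz (a b c : ℕ) : ℝ :=
  ∑' t : ℕ × ℕ × ℕ, if t.2.1 < t.1 ∧ t.2.2 < t.2.1 ∧ 0 < t.2.2 then
    1 / ((t.1 : ℝ) ^ a * (t.2.1 : ℝ) ^ b * (t.2.2 : ℝ) ^ c) else 0

/-- admissible triple indices of weight l -/
def TIdx (l : ℕ) : Finset (ℕ × ℕ × ℕ) :=
  (Finset.range (l + 1) ×ˢ Finset.range (l + 1) ×ˢ Finset.range (l + 1)).filter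
    (fun t => 2 ≤ t.1 ∧ 1 ≤ t.2.1 ∧ 1 ≤ t.2.2 ∧ t.1 + t.2.1 + t.2.2 = l)

open Finset Real Filter

noncomputable def w (m : ℕ) : ℝ := 1 / ((m : ℝ) * Real.sqrt m)

lemma w_nonneg (m : ℕ) : 0 ≤ w m := by
  unfold w; positivity

lemma summable_w : Summable w := by
  have h := Real.summable_one_div_nat_rpow.mpr (by norm_num : (1:ℝ) < 3/2)
  refine h.congr fun n => ?_
  rcases Nat.eq_zero_or_pos n with rfl | hn
  · simp [w]
  · have hn' : (0:ℝ) < n := by exact_mod_cast hn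
    unfold w
    congr 1
    rw [show (3/2 : ℝ) = 1 + 1/2 by norm_num, Real.rpow_add hn', Real.rpow_one,
      Real.sqrt_eq_rpow]

lemma summable_maj : Summable (fun p : ℕ × ℕ => 2 * (w p.1 * w p.2)) :=
  (summable_w.mul_of_nonneg summable_w w_nonneg w_nonneg).mul_left 2


section bounds

variable {x y : ℝ}

/-- core: x√x y√y ≤ x²y -/
lemma core21 (hy : 1 ≤ y) (hyx : y ≤ x) : x * Real.sqrt x * (y * Real.sqrt y) ≤ x^2 * y := by
  have hx1 : (1:ℝ) ≤ x := hy.trans hyx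
  have hx0 : (0:ℝ) ≤ x := by linarith
  have hy0 : (0:ℝ) ≤ y := by linarith
  have h1 : Real.sqrt y ≤ Real.sqrt x := Real.sqrt_le_sqrt hyx
  have h2 : Real.sqrt x * Real.sqrt x = x := Real.mul_self_sqrt hx0
  calc x * Real.sqrt x * (y * Real.sqrt y) = x * y * (Real.sqrt x * Real.sqrt y) := by ring
    _ ≤ x * y * (Real.sqrt x * Real.sqrt x) := by
        apply mul_le_mul_of_nonneg_left (mul_le_mul_of_nonneg_left h1 (Real.sqrt_nonneg x))
        positivity
    _ = x ^ 2 * y := by rw [h2]; ring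

lemma core3 (hy : 1 ≤ y) (hyx : y ≤ x) : x * Real.sqrt x * (y * Real.sqrt y) ≤ x^3 := by
  have hx1 : (1:ℝ) ≤ x := hy.trans hyx
  have hx0 : (0:ℝ) ≤ x := by linarith
  have h2 : Real.sqrt x * Real.sqrt x = x := Real.mul_self_sqrt hx0
  have h3 : y * Real.sqrt y ≤ x * Real.sqrt x := by
    have := Real.sqrt_le_sqrt hyx
    nlinarith [Real.sqrt_nonneg y, Real.sqrt_nonneg x]
  calc x * Real.sqrt x * (y * Real.sqrt y) ≤ x * Real.sqrt x * (x * Real.sqrt x) := by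
        apply mul_le_mul_of_nonneg_left h3; positivity
    _ = x^2 * (Real.sqrt x * Real.sqrt x) := by ring
    _ = x^3 := by rw [h2]; ring

/-- √x √y ≤ 2 y (x - y) for 1 ≤ y, y+1 ≤ x -/
lemma core_sub (hy : 1 ≤ y) (hxy : y + 1 ≤ x) :
    Real.sqrt x * Real.sqrt y ≤ 2 * y * (x - y) := by
  have hy0 : (0:ℝ) ≤ y := by linarith
  have hx0 : (0:ℝ) ≤ x := by linarith
  have hkey : x * y ≤ (2 * y * (x - y))^2 := by nlinarith [sq_nonneg (x - y - 1), sq_nonneg (y-1)]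
  have h1 : Real.sqrt (x*y) ≤ Real.sqrt ((2*y*(x-y))^2) := Real.sqrt_le_sqrt hkey
  rw [Real.sqrt_mul hx0, Real.sqrt_sq (by nlinarith)] at h1
  exact h1

end bounds

section natbounds

variable {m n : ℕ}

lemma cast_facts (h1 : n < m) (h2 : 0 < n) :
    (1:ℝ) ≤ (n:ℝ) ∧ (n:ℝ) + 1 ≤ (m:ℝ) := by
  constructor
  · exact_mod_cast h2
  · exact_mod_cast h1

lemma one_div_le_maj (hm : 0 < m) (hn : 0 < n) {D : ℝ} (hDpos : 0 < D)
    (hD : (m:ℝ) * Real.sqrt m * ((n:ℝ) * Real.sqrt n) ≤ 2 * D) :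
    1 / D ≤ 2 * (w m * w n) := by
  have hm' : (0:ℝ) < m := by exact_mod_cast hm
  have hn' : (0:ℝ) < n := by exact_mod_cast hn
  have hpos : (0:ℝ) < (m:ℝ) * Real.sqrt m * ((n:ℝ) * Real.sqrt n) := by positivity
  have h3 : 1 / (2*D) ≤ 1 / ((m:ℝ) * Real.sqrt m * ((n:ℝ) * Real.sqrt n)) :=
    one_div_le_one_div_of_le hpos hD
  have h4 : (1:ℝ) / ((m:ℝ) * Real.sqrt m * ((n:ℝ) * Real.sqrt n)) = w m * w n := by
    unfold w; rw [div_mul_div_comm]; norm_num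
  rw [h4] at h3
  calc 1 / D = 2 * (1/(2*D)) := by field_simp
    _ ≤ 2 * (w m * w n) := by linarith

lemma bound_dz {a b : ℕ} (ha : 2 ≤ a) (hb : 1 ≤ b) (h1 : n < m) (h2 : 0 < n) :
    1 / ((m:ℝ)^a * (n:ℝ)^b) ≤ 2 * (w m * w n) := by
  obtain ⟨hy, hx⟩ := cast_facts h1 h2
  have hx1 : (1:ℝ) ≤ (m:ℝ) := by linarith
  have hyx : (n:ℝ) ≤ (m:ℝ) := by linarith
  have hx2 : (m:ℝ)^2 ≤ (m:ℝ)^a := pow_le_pow_right₀ hx1 ha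
  have hy2 : (n:ℝ) ≤ (n:ℝ)^b := le_self_pow₀ hy (by omega)
  refine one_div_le_maj (by omega) h2 (by positivity) ?_
  have key : (m:ℝ) * Real.sqrt m * ((n:ℝ) * Real.sqrt n) ≤ (m:ℝ)^a * (n:ℝ)^b :=
    (core21 hy hyx).trans (mul_le_mul hx2 hy2 (by positivity) (by positivity))
  nlinarith [pow_pos (show (0:ℝ) < m by linarith) a, pow_pos (show (0:ℝ) < n by linarith) b]

lemma bound_A {b : ℕ} (hb : 2 ≤ b) (h1 : n < m) (h2 : 0 < n) :
    1 / ((m:ℝ) * (n:ℝ)^b * ((m:ℝ) - n)) ≤ 2 * (w m * w n) := by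
  obtain ⟨hy, hx⟩ := cast_facts h1 h2
  have hx1 : (1:ℝ) ≤ (m:ℝ) := by linarith
  have hy0 : (0:ℝ) < (n:ℝ) := by linarith
  have hd : (0:ℝ) < (m:ℝ) - n := by linarith
  refine one_div_le_maj (by omega) h2 (by positivity) ?_
  have hy2 : (n:ℝ)^2 ≤ (n:ℝ)^b := pow_le_pow_right₀ hy hb
  have hcore := core_sub hy hx
  -- x√x(y√y) = xy(√x√y) ≤ xy·2y(x-y) = 2 x y² (x-y) ≤ 2 x y^b (x-y)
  have h5 : (m:ℝ) * Real.sqrt m * ((n:ℝ) * Real.sqrt n) ≤ 2 * ((m:ℝ) * (n:ℝ)^2 * ((m:ℝ) - n)) := by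
    calc (m:ℝ) * Real.sqrt m * ((n:ℝ) * Real.sqrt n)
        = (m:ℝ) * n * (Real.sqrt m * Real.sqrt n) := by ring
      _ ≤ (m:ℝ) * n * (2 * n * ((m:ℝ) - n)) := by
          apply mul_le_mul_of_nonneg_left hcore; positivity
      _ = 2 * ((m:ℝ) * (n:ℝ)^2 * ((m:ℝ) - n)) := by ring
  refine h5.trans ?_
  have : (m:ℝ) * (n:ℝ)^2 * ((m:ℝ) - n) ≤ (m:ℝ) * (n:ℝ)^b * ((m:ℝ) - n) := by
    apply mul_le_mul_of_nonneg_right _ (le_of_lt hd)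
    exact mul_le_mul_of_nonneg_left hy2 (by linarith)
  linarith

lemma bound_B {a : ℕ} (ha : 3 ≤ a) (h1 : n < m) (h2 : 0 < n) :
    1 / ((m:ℝ)^a * ((m:ℝ) - n)) ≤ 2 * (w m * w n) := by
  obtain ⟨hy, hx⟩ := cast_facts h1 h2
  have hx1 : (1:ℝ) ≤ (m:ℝ) := by linarith
  have hd : (1:ℝ) ≤ (m:ℝ) - n := by linarith
  refine one_div_le_maj (by omega) h2 (by positivity) ?_
  have h5 : (m:ℝ)^3 ≤ (m:ℝ)^a := pow_le_pow_right₀ hx1 ha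
  have h6 : (m:ℝ)^a ≤ (m:ℝ)^a * ((m:ℝ) - n) := le_mul_of_one_le_right (by positivity) hd
  nlinarith [core3 hy (by linarith : (n:ℝ) ≤ (m:ℝ)), pow_pos (show (0:ℝ) < m by linarith) a]

lemma bound_A' {b : ℕ} (hb : 2 ≤ b) (h1 : n < m) (h2 : 0 < n) :
    1 / ((m:ℝ) * (n:ℝ)^b * ((m:ℝ) + n)) ≤ 2 * (w m * w n) := by
  obtain ⟨hy, hx⟩ := cast_facts h1 h2
  have hx1 : (1:ℝ) ≤ (m:ℝ) := by linarith
  have hy0 : (0:ℝ) < (n:ℝ) := by linarith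
  refine one_div_le_maj (by omega) h2 (by positivity) ?_
  have hy2 : (n:ℝ)^2 ≤ (n:ℝ)^b := pow_le_pow_right₀ hy hb
  have h5 : (m:ℝ)^2 * n ≤ (m:ℝ) * (n:ℝ)^2 * ((m:ℝ) + n) := by
    have key : (0:ℝ) ≤ ((m:ℝ)*n) * (((n:ℝ)*m + (n:ℝ)^2) - m) := by
      apply mul_nonneg (by positivity)
      nlinarith
    nlinarith [key]
  have h6 : (m:ℝ) * (n:ℝ)^2 * ((m:ℝ) + n) ≤ (m:ℝ) * (n:ℝ)^b * ((m:ℝ) + n) := by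
    apply mul_le_mul_of_nonneg_right _ (by linarith)
    exact mul_le_mul_of_nonneg_left hy2 (by linarith)
  nlinarith [core21 hy (by linarith : (n:ℝ) ≤ (m:ℝ))]

lemma bound_B' {a : ℕ} (ha : 3 ≤ a) (h1 : n < m) (h2 : 0 < n) :
    1 / ((m:ℝ)^a * ((m:ℝ) + n)) ≤ 2 * (w m * w n) := by
  obtain ⟨hy, hx⟩ := cast_facts h1 h2
  have hx1 : (1:ℝ) ≤ (m:ℝ) := by linarith
  refine one_div_le_maj (by omega) h2 (by positivity) ?_
  have h5 : (m:ℝ)^3 ≤ (m:ℝ)^a := pow_le_pow_right₀ hx1 ha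
  have h6 : (m:ℝ)^a ≤ (m:ℝ)^a * ((m:ℝ) + n) := le_mul_of_one_le_right (by positivity) (by linarith)
  nlinarith [core3 hy (by linarith : (n:ℝ) ≤ (m:ℝ)), pow_pos (show (0:ℝ) < m by linarith) a]

end natbounds

lemma summable_of_guard_bound {F : ℕ × ℕ → ℝ}
    (h0 : ∀ p, 0 ≤ F p) (hb : ∀ p, F p ≤ 2 * (w p.1 * w p.2)) : Summable F :=
  Summable.of_nonneg_of_le h0 hb summable_maj

lemma summable_gd {a b : ℕ} (ha : 2 ≤ a) (hb : 1 ≤ b) :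
    Summable (fun p : ℕ × ℕ =>
      if p.2 < p.1 ∧ 0 < p.2 then 1 / ((p.1:ℝ)^a * (p.2:ℝ)^b) else 0) := by
  apply summable_of_guard_bound
  · intro p
    by_cases h : p.2 < p.1 ∧ 0 < p.2 <;> simp only [h, if_true, if_false] <;> positivity
  · intro p
    by_cases h : p.2 < p.1 ∧ 0 < p.2
    · simp only [h, if_true]; exact bound_dz ha hb h.1 h.2
    · simp only [h, if_false]
      have := w_nonneg p.1; have := w_nonneg p.2; nlinarith

section tele

lemma tendsto_aux (a : ℕ) : Tendsto (fun K : ℕ => 1/((a:ℝ)+K+1)) atTop (nhds 0) := by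
  have h1 : Tendsto (fun K : ℕ => ((K:ℝ) + ((a:ℝ)+1))) atTop atTop :=
    tendsto_atTop_add_const_right atTop _ tendsto_natCast_atTop_atTop
  have := h1.inv_tendsto_atTop
  refine this.congr fun K => ?_
  simp only [Pi.inv_apply, one_div]
  ring_nf

lemma tele_one (a : ℕ) :
    HasSum (fun k : ℕ => 1/((a:ℝ)+k+1) - 1/((a:ℝ)+k+2)) (1/((a:ℝ)+1)) := by
  have h0 : ∀ k : ℕ, 0 ≤ 1/((a:ℝ)+k+1) - 1/((a:ℝ)+k+2) := by
    intro k
    have h1 : (0:ℝ) < (a:ℝ)+k+1 := by positivity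
    rw [sub_nonneg]
    exact one_div_le_one_div_of_le h1 (by linarith)
  rw [hasSum_iff_tendsto_nat_of_nonneg h0]
  have key : ∀ K : ℕ, ∑ k ∈ Finset.range K, (1/((a:ℝ)+k+1) - 1/((a:ℝ)+k+2))
      = 1/((a:ℝ)+1) - 1/((a:ℝ)+K+1) := by
    intro K
    have h2 : ∑ k ∈ Finset.range K, (1/((a:ℝ)+k+1) - 1/((a:ℝ)+k+2))
        = ∑ k ∈ Finset.range K,
            ((fun k : ℕ => 1/((a:ℝ)+k+1)) k - (fun k : ℕ => 1/((a:ℝ)+k+1)) (k+1)) := by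
      apply Finset.sum_congr rfl
      intro i _
      simp only
      push_cast; ring_nf
    rw [h2, Finset.sum_range_sub' (f := fun k : ℕ => 1/((a:ℝ)+k+1)) K]
    norm_num
  simp only [key]
  have h2 := (tendsto_const_nhds (x := 1/((a:ℝ)+1)) (f := atTop (α := ℕ))).sub (tendsto_aux a)
  simpa using h2

lemma tele_hasSum (a b : ℕ) (hab : a ≤ b) :
    HasSum (fun k : ℕ => 1/((a:ℝ)+k+1) - 1/((b:ℝ)+k+1))
      (∑ j ∈ Finset.Icc (a+1) b, 1/(j:ℝ)) := by
  induction b, hab using Nat.le_induction with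
  | base =>
      have : (Finset.Icc (a+1) a) = ∅ := by
        apply Finset.Icc_eq_empty; omega
      rw [this]
      simpa using hasSum_zero
  | succ b hab ih =>
      have h3 := ih.add (tele_one b)
      rw [Finset.sum_Icc_succ_top (by omega : a+1 ≤ b+1)]
      have heq : (fun k : ℕ => 1/((a:ℝ)+k+1) - 1/((((b+1):ℕ):ℝ)+k+1))
          = fun k : ℕ => (1/((a:ℝ)+k+1) - 1/((b:ℝ)+k+1)) + (1/((b:ℝ)+k+1) - 1/((b:ℝ)+k+2)) := by
        funext k; push_cast; ring
      rw [heq]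
      convert h3 using 2
      push_cast; ring

end tele

lemma tsum_shift {g : ℕ → ℝ} (n : ℕ) (hs : Summable g) (hg : ∀ m, m ≤ n → g m = 0) :
    ∑' m, g m = ∑' k, g (k + (n+1)) := by
  rw [← Summable.sum_add_tsum_nat_add (n+1) hs,
    Finset.sum_eq_zero (fun i hi => hg i (Nat.lt_succ_iff.mp (Finset.mem_range.mp hi)))]
  exact zero_add _

lemma geom_id (c : ℕ) {x y : ℝ} (hy : 0 < y) (hxy : y < x) :
    ∑ j ∈ Finset.Icc 2 (c+3), 1/(x^j * y^(c+4-j))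
      = 1/(x * y^(c+2) * (x-y)) - 1/(x^(c+3) * (x-y)) := by
  have hx : 0 < x := hy.trans hxy
  have hx0 : x ≠ 0 := ne_of_gt hx
  have hy0 : y ≠ 0 := ne_of_gt hy
  have hd0 : x - y ≠ 0 := by intro h; apply absurd hxy; simp; linarith [sub_eq_zero.mp h]
  have hIcc : ∑ j ∈ Finset.Icc 2 (c+3), 1/(x^j * y^(c+4-j))
      = ∑ i ∈ Finset.range (c+2), 1/(x^(2+i) * y^(c+4-(2+i))) := by
    rw [← Finset.Ico_add_one_right_eq_Icc, Finset.sum_Ico_eq_sum_range,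
      show c+3+1 - 2 = c+2 from by omega]
  rw [hIcc]
  have step : ∀ i ∈ Finset.range (c+2), 1/(x^(2+i) * y^(c+4-(2+i)))
      = (fun i : ℕ => 1/(x^(i+1) * y^(c+2-i) * (x-y))) i
        - (fun i : ℕ => 1/(x^(i+1) * y^(c+2-i) * (x-y))) (i+1) := by
    intro i hi
    have hi' : i < c+2 := Finset.mem_range.mp hi
    obtain ⟨d, hd2⟩ : ∃ d, c+2-i = d+1 := ⟨c+1-i, by omega⟩
    have e1 : c+4-(2+i) = d+1 := by omega
    have e2 : c+2-(i+1) = d := by omega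
    simp only [e1, hd2, e2]
    field_simp
    ring
  rw [Finset.sum_congr rfl step, Finset.sum_range_sub']
  simp only [Nat.sub_self, pow_zero, Nat.sub_zero, zero_add, pow_one, mul_one]

lemma geom_id_alt (c : ℕ) (hc : Even c) {x y : ℝ} (hy : 0 < y) (hxy : y < x) :
    ∑ j ∈ Finset.Icc 2 (c+3), (-1:ℝ)^j * (1/(x^j * y^(c+4-j)))
      = 1/(x * y^(c+2) * (x+y)) - 1/(x^(c+3) * (x+y)) := by
  have hx : 0 < x := hy.trans hxy
  have hx0 : x ≠ 0 := ne_of_gt hx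
  have hy0 : y ≠ 0 := ne_of_gt hy
  have hs0 : x + y ≠ 0 := by positivity
  have hIcc : ∑ j ∈ Finset.Icc 2 (c+3), (-1:ℝ)^j * (1/(x^j * y^(c+4-j)))
      = ∑ i ∈ Finset.range (c+2), (-1:ℝ)^(2+i) * (1/(x^(2+i) * y^(c+4-(2+i)))) := by
    rw [← Finset.Ico_add_one_right_eq_Icc, Finset.sum_Ico_eq_sum_range,
      show c+3+1 - 2 = c+2 from by omega]
  rw [hIcc]
  have step : ∀ i ∈ Finset.range (c+2), (-1:ℝ)^(2+i) * (1/(x^(2+i) * y^(c+4-(2+i))))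
      = (fun i : ℕ => (-1:ℝ)^i * (1/(x^(i+1) * y^(c+2-i) * (x+y)))) i
        - (fun i : ℕ => (-1:ℝ)^i * (1/(x^(i+1) * y^(c+2-i) * (x+y)))) (i+1) := by
    intro i hi
    have hi' : i < c+2 := Finset.mem_range.mp hi
    obtain ⟨d, hd2⟩ : ∃ d, c+2-i = d+1 := ⟨c+1-i, by omega⟩
    have e1 : c+4-(2+i) = d+1 := by omega
    have e2 : c+2-(i+1) = d := by omega
    simp only [e1, hd2, e2, pow_add, pow_succ]
    field_simp
    ring
  rw [Finset.sum_congr rfl step, Finset.sum_range_sub']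
  have hc2 : (-1:ℝ)^(c+2) = 1 := (hc.add (by norm_num : Even 2)).neg_one_pow
  simp only [Nat.sub_self, pow_zero, Nat.sub_zero, zero_add, pow_one, mul_one, hc2, one_mul]

/-- partial harmonic sum -/
noncomputable def hsum (n : ℕ) : ℝ := ∑ j ∈ Finset.Icc 1 n, 1/(j:ℝ)

noncomputable def gA (c : ℕ) (p : ℕ × ℕ) : ℝ :=
  if p.2 < p.1 ∧ 0 < p.2 then 1/((p.1:ℝ) * (p.2:ℝ)^(c+2) * ((p.1:ℝ) - p.2)) else 0

noncomputable def gB (c : ℕ) (p : ℕ × ℕ) : ℝ :=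
  if p.2 < p.1 ∧ 0 < p.2 then 1/((p.1:ℝ)^(c+3) * ((p.1:ℝ) - p.2)) else 0

noncomputable def gA' (c : ℕ) (p : ℕ × ℕ) : ℝ :=
  if p.2 < p.1 ∧ 0 < p.2 then 1/((p.1:ℝ) * (p.2:ℝ)^(c+2) * ((p.1:ℝ) + p.2)) else 0

noncomputable def gB' (c : ℕ) (p : ℕ × ℕ) : ℝ :=
  if p.2 < p.1 ∧ 0 < p.2 then 1/((p.1:ℝ)^(c+3) * ((p.1:ℝ) + p.2)) else 0

section summability

lemma guard_nonneg {t : ℝ} (ht : 0 ≤ t) (G : Prop) [Decidable G] :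
    (0:ℝ) ≤ if G then t else 0 := by
  split <;> simp [ht]

lemma maj_nonneg (p : ℕ × ℕ) : (0:ℝ) ≤ 2 * (w p.1 * w p.2) := by
  have := w_nonneg p.1; have := w_nonneg p.2; nlinarith

lemma guard_pos_facts {p : ℕ × ℕ} (h : p.2 < p.1 ∧ 0 < p.2) :
    (0:ℝ) < (p.2:ℝ) ∧ (p.2:ℝ) + 1 ≤ (p.1:ℝ) ∧ (0:ℝ) < (p.1:ℝ) - p.2 ∧ (0:ℝ) < (p.1:ℝ) := by
  have h3 : (p.2:ℝ) + 1 ≤ (p.1:ℝ) := by exact_mod_cast h.1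
  have h4 : (0:ℝ) < (p.2:ℝ) := by exact_mod_cast h.2
  exact ⟨h4, h3, by linarith, by linarith⟩

lemma summable_gA (c : ℕ) : Summable (gA c) := by
  apply summable_of_guard_bound
  · intro p
    unfold gA
    split
    · next h =>
        obtain ⟨h4, h3, h5, h6⟩ := guard_pos_facts h
        positivity
    · exact le_refl 0
  · intro p
    unfold gA
    split
    · next h => exact bound_A (by omega) h.1 h.2
    · exact maj_nonneg p

lemma summable_gB (c : ℕ) : Summable (gB c) := by
  apply summable_of_guard_bound
  · intro p
    unfold gB
    split
    · next h =>
        obtain ⟨h4, h3, h5, h6⟩ := guard_pos_facts h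
        positivity
    · exact le_refl 0
  · intro p
    unfold gB
    split
    · next h => exact bound_B (by omega) h.1 h.2
    · exact maj_nonneg p

lemma summable_gA' (c : ℕ) : Summable (gA' c) := by
  apply summable_of_guard_bound
  · intro p
    unfold gA'
    split
    · next h =>
        obtain ⟨h4, h3, h5, h6⟩ := guard_pos_facts h
        positivity
    · exact le_refl 0
  · intro p
    unfold gA'
    split
    · next h => exact bound_A' (by omega) h.1 h.2
    · exact maj_nonneg p

lemma summable_gB' (c : ℕ) : Summable (gB' c) := by
  apply summable_of_guard_bound
  · intro p
    unfold gB'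
    split
    · next h =>
        obtain ⟨h4, h3, h5, h6⟩ := guard_pos_facts h
        positivity
    · exact le_refl 0
  · intro p
    unfold gB'
    split
    · next h => exact bound_B' (by omega) h.1 h.2
    · exact maj_nonneg p

end summability

section slices

lemma sliceA (c n : ℕ) (hs : Summable fun m => gA c (m, n)) :
    ∑' m, gA c (m, n) = if 0 < n then (1/(n:ℝ)^(c+3)) * hsum n else 0 := by
  rcases Nat.eq_zero_or_pos n with rfl | hn
  · simp [gA]
  · rw [if_pos hn]
    rw [tsum_shift n hs (fun m hm => by
      simp only [gA, ite_eq_right_iff]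
      intro h; exfalso; omega)]
    have key : ∀ k : ℕ, gA c (k + (n+1), n)
        = (1/(n:ℝ)^(c+3)) * (1/(((0:ℕ):ℝ)+k+1) - 1/((n:ℝ)+k+1)) := by
      intro k
      have hg : (n < k + (n+1) ∧ 0 < n) := ⟨by omega, hn⟩
      simp only [gA, if_pos hg]
      have hn' : (0:ℝ) < n := by exact_mod_cast hn
      have e : ((k + (n + 1) : ℕ) : ℝ) - (n:ℝ) = (k:ℝ) + 1 := by push_cast; ring
      rw [e]
      push_cast
      have h1 : ((k:ℝ) + ((n:ℝ) + 1)) ≠ 0 := by positivity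
      have h2 : ((n:ℝ))^(c+2) ≠ 0 := by positivity
      have h3 : ((k:ℝ) + 1) ≠ 0 := by positivity
      have h4 : ((n:ℝ))^(c+3) ≠ 0 := by positivity
      have h5 : ((n:ℝ) + (k:ℝ) + 1) ≠ 0 := by positivity
      field_simp
      ring
    rw [tsum_congr key, tsum_mul_left]
    congr 1
    rw [(tele_hasSum 0 n (Nat.zero_le n)).tsum_eq]
    unfold hsum
    norm_num

lemma sliceA' (c n : ℕ) (hs : Summable fun m => gA' c (m, n)) :
    ∑' m, gA' c (m, n)
      = if 0 < n then (1/(n:ℝ)^(c+3)) * (∑ j ∈ Finset.Icc (n+1) (2*n), 1/(j:ℝ)) else 0 := by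
  rcases Nat.eq_zero_or_pos n with rfl | hn
  · simp [gA']
  · rw [if_pos hn]
    rw [tsum_shift n hs (fun m hm => by
      simp only [gA', ite_eq_right_iff]
      intro h; exfalso; omega)]
    have key : ∀ k : ℕ, gA' c (k + (n+1), n)
        = (1/(n:ℝ)^(c+3)) * (1/((n:ℝ)+k+1) - 1/(((2*n:ℕ):ℝ)+k+1)) := by
      intro k
      have hg : (n < k + (n+1) ∧ 0 < n) := ⟨by omega, hn⟩
      simp only [gA', if_pos hg]
      have hn' : (0:ℝ) < n := by exact_mod_cast hn
      push_cast
      have h1 : ((k:ℝ) + ((n:ℝ) + 1)) ≠ 0 := by positivity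
      have h2 : ((n:ℝ))^(c+2) ≠ 0 := by positivity
      have h4 : ((n:ℝ))^(c+3) ≠ 0 := by positivity
      have h5 : ((n:ℝ) + (k:ℝ) + 1) ≠ 0 := by positivity
      have h6 : (2*(n:ℝ) + (k:ℝ) + 1) ≠ 0 := by positivity
      field_simp
      ring
    rw [tsum_congr key, tsum_mul_left]
    congr 1
    exact (tele_hasSum n (2*n) (by omega)).tsum_eq

lemma sliceB (c m : ℕ) :
    ∑' n, gB c (m, n) = if 0 < m then (1/(m:ℝ)^(c+3)) * hsum (m-1) else 0 := by
  have hsupp : ∀ n ∉ Finset.Ioo 0 m, gB c (m, n) = 0 := by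
    intro n hn
    simp only [gB, ite_eq_right_iff]
    intro h
    exact absurd (Finset.mem_Ioo.mpr ⟨h.2, h.1⟩) hn
  rw [tsum_eq_sum hsupp]
  rcases Nat.eq_zero_or_pos m with rfl | hm
  · simp
  · rw [if_pos hm]
    have key : ∀ n ∈ Finset.Ioo 0 m, gB c (m, n)
        = (1/(m:ℝ)^(c+3)) * (1/(((m - n:ℕ)):ℝ)) := by
      intro n hn
      rw [Finset.mem_Ioo] at hn
      have hg : (n < m ∧ 0 < n) := ⟨hn.2, hn.1⟩
      simp only [gB, if_pos hg]
      rw [Nat.cast_sub (le_of_lt hn.2), div_mul_div_comm, one_mul]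
    rw [Finset.sum_congr rfl key, ← Finset.mul_sum]
    congr 1
    unfold hsum
    apply Finset.sum_nbij' (i := fun n => m - n) (j := fun j => m - j)
    · intro a ha; rw [Finset.mem_Ioo] at ha; rw [Finset.mem_Icc]; omega
    · intro a ha; rw [Finset.mem_Icc] at ha; rw [Finset.mem_Ioo]; omega
    · intro a ha; rw [Finset.mem_Ioo] at ha; omega
    · intro a ha; rw [Finset.mem_Icc] at ha; omega
    · intro a _; rfl

lemma sliceB' (c m : ℕ) :
    ∑' n, gB' c (m, n)
      = if 0 < m then (1/(m:ℝ)^(c+3)) * (∑ j ∈ Finset.Icc (m+1) (2*m-1), 1/(j:ℝ)) else 0 := by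
  have hsupp : ∀ n ∉ Finset.Ioo 0 m, gB' c (m, n) = 0 := by
    intro n hn
    simp only [gB', ite_eq_right_iff]
    intro h
    exact absurd (Finset.mem_Ioo.mpr ⟨h.2, h.1⟩) hn
  rw [tsum_eq_sum hsupp]
  rcases Nat.eq_zero_or_pos m with rfl | hm
  · simp
  · rw [if_pos hm]
    have key : ∀ n ∈ Finset.Ioo 0 m, gB' c (m, n)
        = (1/(m:ℝ)^(c+3)) * (1/(((m + n:ℕ)):ℝ)) := by
      intro n hn
      rw [Finset.mem_Ioo] at hn
      have hg : (n < m ∧ 0 < n) := ⟨hn.2, hn.1⟩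
      simp only [gB', if_pos hg]
      rw [Nat.cast_add, div_mul_div_comm, one_mul]
    rw [Finset.sum_congr rfl key, ← Finset.mul_sum]
    congr 1
    apply Finset.sum_nbij' (i := fun n => m + n) (j := fun j => j - m)
    · intro a ha; rw [Finset.mem_Ioo] at ha; rw [Finset.mem_Icc]; omega
    · intro a ha; rw [Finset.mem_Icc] at ha; rw [Finset.mem_Ioo]; omega
    · intro a ha; rw [Finset.mem_Ioo] at ha; omega
    · intro a ha; rw [Finset.mem_Icc] at ha; omega
    · intro a _; rfl

end slices

noncomputable def outA (c n : ℕ) : ℝ := if 0 < n then (1/(n:ℝ)^(c+3)) * hsum n else 0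
noncomputable def outB (c m : ℕ) : ℝ := if 0 < m then (1/(m:ℝ)^(c+3)) * hsum (m-1) else 0
noncomputable def outA' (c n : ℕ) : ℝ :=
  if 0 < n then (1/(n:ℝ)^(c+3)) * (∑ j ∈ Finset.Icc (n+1) (2*n), 1/(j:ℝ)) else 0
noncomputable def outB' (c m : ℕ) : ℝ :=
  if 0 < m then (1/(m:ℝ)^(c+3)) * (∑ j ∈ Finset.Icc (m+1) (2*m-1), 1/(j:ℝ)) else 0

section outer

lemma sum_inv_Icc_le (a b : ℕ) (ha : 1 ≤ a) :
    ∑ j ∈ Finset.Icc a b, 1/(j:ℝ) ≤ ((Finset.Icc a b).card : ℝ) := by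
  have h := Finset.sum_le_card_nsmul (Finset.Icc a b) (fun j => 1/(j:ℝ)) 1 ?_
  · simpa using h
  · intro j hj
    rw [Finset.mem_Icc] at hj
    have h1 : (1:ℝ) ≤ (j:ℝ) := by exact_mod_cast le_trans ha hj.1
    rw [div_le_one (by linarith)]
    exact h1

lemma out_le (c n : ℕ) (hn : 1 ≤ n) {S : ℝ} (hS : S ≤ n) :
    (1/(n:ℝ)^(c+3)) * S ≤ 1/(n:ℝ)^2 := by
  have hn' : (1:ℝ) ≤ (n:ℝ) := by exact_mod_cast hn
  have h1 : (n:ℝ)^3 ≤ (n:ℝ)^(c+3) := pow_le_pow_right₀ hn' (by omega)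
  have h2 : (1/(n:ℝ)^(c+3)) * S ≤ (1/(n:ℝ)^(c+3)) * n :=
    mul_le_mul_of_nonneg_left hS (by positivity)
  refine h2.trans ?_
  rw [div_mul_eq_mul_div, div_le_div_iff₀ (by positivity) (by positivity)]
  nlinarith [pow_pos (show (0:ℝ) < n by linarith) 3]

lemma summable_outer {F : ℕ → ℝ} (h0 : ∀ n, 0 ≤ F n) (hb : ∀ n, 1 ≤ n → F n ≤ 1/(n:ℝ)^2)
    (h00 : F 0 = 0) : Summable F := by
  apply Summable.of_nonneg_of_le h0 ?_ (Real.summable_one_div_nat_pow.mpr one_lt_two)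
  intro n
  rcases Nat.eq_zero_or_pos n with rfl | hn
  · rw [h00]; norm_num
  · exact hb n hn

lemma hsum_nonneg (n : ℕ) : 0 ≤ hsum n := by
  unfold hsum; positivity

lemma hsum_le (n : ℕ) : hsum n ≤ (n:ℝ) := by
  have := sum_inv_Icc_le 1 n le_rfl
  unfold hsum
  rwa [Nat.card_Icc, show n + 1 - 1 = n from by omega] at this

lemma sum_inv_Icc_nonneg (a b : ℕ) : 0 ≤ ∑ j ∈ Finset.Icc a b, 1/(j:ℝ) := by positivity

lemma summable_outA (c : ℕ) : Summable (outA c) := by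
  apply summable_outer
  · intro n; unfold outA; split
    · exact mul_nonneg (by positivity) (hsum_nonneg n)
    · exact le_rfl
  · intro n hn
    unfold outA
    rw [if_pos (show 0 < n from hn)]
    exact out_le c n hn (hsum_le n)
  · simp [outA]

lemma summable_outB (c : ℕ) : Summable (outB c) := by
  apply summable_outer
  · intro n; unfold outB; split
    · exact mul_nonneg (by positivity) (hsum_nonneg _)
    · exact le_rfl
  · intro n hn
    unfold outB
    rw [if_pos (show 0 < n from hn)]
    refine out_le c n hn ((hsum_le _).trans ?_)
    exact_mod_cast Nat.sub_le n 1
  · simp [outB]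

lemma summable_outA' (c : ℕ) : Summable (outA' c) := by
  apply summable_outer
  · intro n; unfold outA'; split
    · exact mul_nonneg (by positivity) (sum_inv_Icc_nonneg _ _)
    · exact le_rfl
  · intro n hn
    unfold outA'
    rw [if_pos (show 0 < n from hn)]
    refine out_le c n hn ((sum_inv_Icc_le _ _ (by omega)).trans ?_)
    rw [Nat.card_Icc]
    exact_mod_cast by omega
  · simp [outA']

lemma summable_outB' (c : ℕ) : Summable (outB' c) := by
  apply summable_outer
  · intro n; unfold outB'; split
    · exact mul_nonneg (by positivity) (sum_inv_Icc_nonneg _ _)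
    · exact le_rfl
  · intro n hn
    unfold outB'
    rw [if_pos (show 0 < n from hn)]
    refine out_le c n hn ((sum_inv_Icc_le _ _ (by omega)).trans ?_)
    rw [Nat.card_Icc]
    exact_mod_cast by omega
  · simp [outB']

end outer

lemma tsum_swap {f : ℕ × ℕ → ℝ} (h : Summable f) : ∑' p, f p = ∑' (n) (m), f (m, n) := by
  rw [← (Equiv.prodComm ℕ ℕ).tsum_eq f]
  exact Summable.tsum_prod h.prod_symm

lemma euler_sum (c : ℕ) :
    ∑ l1 ∈ Finset.Icc 2 (c+3), dz l1 (c+4-l1) = rz (c+4) := by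
  classical
  have h1 : ∀ l1 ∈ Finset.Icc 2 (c+3), Summable (fun p : ℕ×ℕ =>
      if p.2 < p.1 ∧ 0 < p.2 then 1 / ((p.1:ℝ)^l1 * (p.2:ℝ)^(c+4-l1)) else 0) := by
    intro l1 hl1
    rw [Finset.mem_Icc] at hl1
    exact summable_gd hl1.1 (by omega)
  simp only [dz]
  rw [← Summable.tsum_finsetSum h1]
  have h3 : ∀ p : ℕ×ℕ, ∑ l1 ∈ Finset.Icc 2 (c+3),
      (if p.2 < p.1 ∧ 0 < p.2 then 1 / ((p.1:ℝ)^l1 * (p.2:ℝ)^(c+4-l1)) else 0)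
      = gA c p - gB c p := by
    intro p
    by_cases h : p.2 < p.1 ∧ 0 < p.2
    · simp only [if_pos h, gA, gB]
      obtain ⟨h4, h3', h5, h6⟩ := guard_pos_facts h
      exact geom_id c h4 (by linarith : (p.2:ℝ) < p.1)
    · simp [if_neg h, gA, gB, h]
  rw [tsum_congr h3]
  rw [Summable.tsum_sub (summable_gA c) (summable_gB c)]
  rw [tsum_swap (summable_gA c), Summable.tsum_prod (summable_gB c)]
  have h4 : ∀ n, ∑' m, gA c (m, n) = outA c n := fun n =>
    sliceA c n ((summable_gA c).prod_symm.prod_factor n)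
  have h5 : ∀ m, ∑' n, gB c (m, n) = outB c m := fun m => sliceB c m
  rw [tsum_congr h4, tsum_congr h5]
  rw [← Summable.tsum_sub (summable_outA c) (summable_outB c)]
  have h6 : ∀ n : ℕ, outA c n - outB c n = (if 0 < n then 1/(n:ℝ)^(c+4) else 0) := by
    intro n
    cases n with
    | zero => simp [outA, outB]
    | succ n' =>
        have hp : 0 < n'+1 := Nat.succ_pos n'
        simp only [outA, outB, if_pos hp, Nat.add_sub_cancel]
        have hh : hsum (n'+1) = hsum n' + 1/((n'+1:ℕ):ℝ) := by
          unfold hsum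
          rw [Finset.sum_Icc_succ_top (by omega : 1 ≤ n'+1)]
        rw [hh]
        have hpos : (0:ℝ) < ((n'+1:ℕ):ℝ) := by positivity
        push_cast
        field_simp
        ring
  rw [tsum_congr h6]
  rfl

lemma alt_sum (c : ℕ) (hc : Even c) :
    ∑ l1 ∈ Finset.Icc 2 (c+3), (-1:ℝ)^l1 * dz l1 (c+4-l1) = rz (c+4) / 2 := by
  classical
  have h1 : ∀ l1 ∈ Finset.Icc 2 (c+3), Summable (fun p : ℕ×ℕ =>
      (-1:ℝ)^l1 * (if p.2 < p.1 ∧ 0 < p.2 then 1 / ((p.1:ℝ)^l1 * (p.2:ℝ)^(c+4-l1)) else 0)) := by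
    intro l1 hl1
    rw [Finset.mem_Icc] at hl1
    exact (summable_gd hl1.1 (by omega)).mul_left _
  simp only [dz]
  have h2 : ∀ l1 ∈ Finset.Icc 2 (c+3),
      (-1:ℝ)^l1 * (∑' p : ℕ×ℕ, if p.2 < p.1 ∧ 0 < p.2 then
          1 / ((p.1:ℝ)^l1 * (p.2:ℝ)^(c+4-l1)) else 0)
      = ∑' p : ℕ×ℕ, (-1:ℝ)^l1 * (if p.2 < p.1 ∧ 0 < p.2 then
          1 / ((p.1:ℝ)^l1 * (p.2:ℝ)^(c+4-l1)) else 0) := by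
    intro l1 _
    exact (tsum_mul_left).symm
  rw [Finset.sum_congr rfl h2, ← Summable.tsum_finsetSum h1]
  have h3 : ∀ p : ℕ×ℕ, ∑ l1 ∈ Finset.Icc 2 (c+3),
      (-1:ℝ)^l1 * (if p.2 < p.1 ∧ 0 < p.2 then 1 / ((p.1:ℝ)^l1 * (p.2:ℝ)^(c+4-l1)) else 0)
      = gA' c p - gB' c p := by
    intro p
    by_cases h : p.2 < p.1 ∧ 0 < p.2
    · simp only [if_pos h, gA', gB']
      obtain ⟨h4, h3', h5, h6⟩ := guard_pos_facts h
      have := geom_id_alt c hc h4 (by linarith : (p.2:ℝ) < p.1)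
      simpa using this
    · simp [if_neg h, gA', gB', h]
  rw [tsum_congr h3]
  rw [Summable.tsum_sub (summable_gA' c) (summable_gB' c)]
  rw [tsum_swap (summable_gA' c), Summable.tsum_prod (summable_gB' c)]
  have h4 : ∀ n, ∑' m, gA' c (m, n) = outA' c n := fun n =>
    sliceA' c n ((summable_gA' c).prod_symm.prod_factor n)
  have h5 : ∀ m, ∑' n, gB' c (m, n) = outB' c m := fun m => sliceB' c m
  rw [tsum_congr h4, tsum_congr h5]
  rw [← Summable.tsum_sub (summable_outA' c) (summable_outB' c)]
  have h6 : ∀ n : ℕ, outA' c n - outB' c n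
      = (1/2) * (if 0 < n then 1/(n:ℝ)^(c+4) else 0) := by
    intro n
    cases n with
    | zero => simp [outA', outB']
    | succ n' =>
        have hp : 0 < n'+1 := Nat.succ_pos n'
        simp only [outA', outB', if_pos hp]
        have e1 : 2*(n'+1) = (2*n'+1) + 1 := by omega
        have e2 : 2*(n'+1) - 1 = 2*n'+1 := by omega
        rw [e2, e1, Finset.sum_Icc_succ_top (by omega : n'+1+1 ≤ 2*n'+1+1)]
        have hpos : (0:ℝ) < ((n'+1:ℕ):ℝ) := by positivity
        push_cast
        field_simp
        ring
  rw [tsum_congr h6, tsum_mul_left]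
  show (1/2) * rz (c+4) = rz (c+4) / 2
  ring

theorem restricted_sum_double (l : ℕ) (hl : 4 ≤ l) (hev : Even l) :
    (∑ l1 ∈ (Finset.Icc 2 (l - 1)).filter (fun l1 => Even l1 ∧ Even (l - l1)),
      dz l1 (l - l1)) = 3 / 4 * rz l ∧
    (∑ l1 ∈ (Finset.Icc 2 (l - 1)).filter (fun l1 => Odd l1 ∧ Odd (l - l1)),
      dz l1 (l - l1)) = 1 / 4 * rz l := by
  classical
  obtain ⟨c, rfl⟩ : ∃ c, l = c + 4 := ⟨l - 4, by omega⟩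
  have hc : Even c := by
    obtain ⟨k, hk⟩ := hev
    exact ⟨k - 2, by omega⟩
  have e1 : c + 4 - 1 = c + 3 := by omega
  rw [e1]
  have hfE : (Finset.Icc 2 (c+3)).filter (fun l1 => Even l1 ∧ Even (c+4-l1))
      = (Finset.Icc 2 (c+3)).filter (fun l1 => Even l1) := by
    apply Finset.filter_congr
    intro l1 hl1
    rw [Finset.mem_Icc] at hl1
    obtain ⟨k, hk⟩ := hc
    simp only [Nat.even_iff]
    omega
  have hfO : (Finset.Icc 2 (c+3)).filter (fun l1 => Odd l1 ∧ Odd (c+4-l1))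
      = (Finset.Icc 2 (c+3)).filter (fun l1 => ¬ Even l1) := by
    apply Finset.filter_congr
    intro l1 hl1
    rw [Finset.mem_Icc] at hl1
    obtain ⟨k, hk⟩ := hc
    simp only [Nat.odd_iff, Nat.even_iff]
    omega
  rw [hfE, hfO]
  set E := ∑ l1 ∈ (Finset.Icc 2 (c+3)).filter (fun l1 => Even l1), dz l1 (c+4-l1) with hE
  set O := ∑ l1 ∈ (Finset.Icc 2 (c+3)).filter (fun l1 => ¬ Even l1), dz l1 (c+4-l1) with hO
  have key1 : E + O = rz (c+4) := by
    rw [hE, hO, Finset.sum_filter_add_sum_filter_not]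
    exact euler_sum c
  have key2 : E - O = rz (c+4) / 2 := by
    have halt := alt_sum c hc
    rw [← Finset.sum_filter_add_sum_filter_not (Finset.Icc 2 (c+3)) (fun l1 => Even l1)
      (fun l1 => (-1:ℝ)^l1 * dz l1 (c+4-l1))] at halt
    have hA : ∑ l1 ∈ (Finset.Icc 2 (c+3)).filter (fun l1 => Even l1),
        (-1:ℝ)^l1 * dz l1 (c+4-l1) = E := by
      rw [hE]
      apply Finset.sum_congr rfl
      intro l1 hl1
      rw [Finset.mem_filter] at hl1
      rw [hl1.2.neg_one_pow, one_mul]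
    have hB : ∑ l1 ∈ (Finset.Icc 2 (c+3)).filter (fun l1 => ¬ Even l1),
        (-1:ℝ)^l1 * dz l1 (c+4-l1) = -O := by
      rw [hO, ← Finset.sum_neg_distrib]
      apply Finset.sum_congr rfl
      intro l1 hl1
      rw [Finset.mem_filter] at hl1
      rw [(Nat.not_even_iff_odd.mp hl1.2).neg_one_pow]
      ring
    rw [hA, hB] at halt
    linarith
  constructor <;> linarith
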